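/- For integers k ≥ 3 and n ≥ 0, the partial sum ∑_{j=k}^{k+n} Γ(j)Γ(2k-1)/(Γ(j+k)Γ(k-1)) equals 1 − Γ(2k-1)Γ(k+n+1)/(Γ(k)Γ(2k+n)). -/

import Mathlib

open Real Finset

theorem b_partial_sum (k n : ℕ) (hk : 3 ≤ k) :
    ∑ j ∈ Finset.Icc k (k + n),
        Real.Gamma j * Real.Gamma (2 * k - 1) /
          (Real.Gamma ((j : ℝ) + k) * Real.Gamma ((k : ℝ) - 1))
      = 1 - Real.Gamma (2 * k - 1) * Real.Gamma ((k : ℝ) + n + 1) /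
          (Real.Gamma k * Real.Gamma (2 * k + n)) := by
  have hk3 : (3:ℝ) ≤ (k:ℝ) := by exact_mod_cast hk
  have hG1 : Real.Gamma ((k:ℝ) - 1) ≠ 0 :=
    ne_of_gt (Real.Gamma_pos_of_pos (by linarith))
  have hGk : Real.Gamma (k:ℝ) = ((k:ℝ) - 1) * Real.Gamma ((k:ℝ) - 1) := by
    have h := Real.Gamma_add_one (show (k:ℝ)-1 ≠ 0 by linarith)
    rwa [sub_add_cancel] at h
  have hk1 : (k:ℝ) - 1 ≠ 0 := by linarith
  induction n with
  | zero =>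
    have h2 : Real.Gamma (2*(k:ℝ)-1) ≠ 0 :=
      ne_of_gt (Real.Gamma_pos_of_pos (by linarith))
    have e1 := Real.Gamma_add_one (show 2*(k:ℝ)-1 ≠ 0 by linarith)
    have e2 := Real.Gamma_add_one (show (k:ℝ) ≠ 0 by linarith)
    simp only [Nat.add_zero, Finset.Icc_self, Finset.sum_singleton, Nat.cast_zero, add_zero]
    rw [show (k:ℝ)+(k:ℝ) = (2*(k:ℝ)-1)+1 by ring, e1,
        show (k:ℝ)+1 = (k:ℝ)+1 from rfl, e2,
        show 2*(k:ℝ) = (2*(k:ℝ)-1)+1 by ring, e1, hGk]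
    have h21 : 2*(k:ℝ)-1 ≠ 0 := by linarith
    have h3 := mul_ne_zero h21 h2
    field_simp
    ring_nf
    ring_nf at h3
    linear_combination mul_inv_cancel₀ h3
  | succ n ih =>
    have h2 : Real.Gamma (2*(k:ℝ)+n) ≠ 0 :=
      ne_of_gt (Real.Gamma_pos_of_pos (by positivity))
    rw [show k + (n+1) = (k+n)+1 from rfl, Finset.sum_Icc_succ_top (by omega), ih]
    push_cast
    have e1 := Real.Gamma_add_one (show 2*(k:ℝ)+↑n ≠ 0 by positivity)
    have e2 := Real.Gamma_add_one (show (k:ℝ)+↑n+1 ≠ 0 by positivity)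
    rw [show (k:ℝ)+↑n+1+↑k = (2*(k:ℝ)+↑n)+1 by ring, e1,
        show (k:ℝ)+(↑n+1)+1 = ((k:ℝ)+↑n+1)+1 by ring, e2,
        show 2*(k:ℝ)+(↑n+1) = (2*(k:ℝ)+↑n)+1 by ring, e1,
        hGk]
    have hkn : 2*(k:ℝ)+↑n ≠ 0 := by positivity
    field_simp
    ring
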